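/- arXiv:math/0403361 — 2 statements merged into one kernel-verified Lean document; each statement's English description precedes it below -/
import Mathlib

section
/- Let k be a field, l/k a field extension, and A an associative k-algebra. Then A is finitely generated as a k-algebra if and only if A ⊗_k l is finitely generated as an l-algebra. -/
open TensorProduct

/-- An associative `k`-algebra `A` is finitely generated as a `k`-algebra if and only if
`A ⊗_k l` is finitely generated as an `l`-algebra, for any field extension `l/k`. -/
theorem finiteType_iff_finiteType_baseChange
    (k : Type*) [Field k] (l : Type*) [Field l] [Algebra k l]
    (A : Type*) [Ring A] [Algebra k A] :
    Algebra.FiniteType k A ↔ Algebra.FiniteType l (l ⊗[k] A) := by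
  constructor
  · rintro ⟨hfg⟩
    obtain ⟨s, hsfin, hs⟩ := Subalgebra.fg_def.mp hfg
    refine ⟨Subalgebra.fg_def.mpr ⟨(fun a => (1 : l) ⊗ₜ[k] a) '' s, hsfin.image _, ?_⟩⟩
    set C := Algebra.adjoin l ((fun a => (1 : l) ⊗ₜ[k] a) '' s) with hC
    have key : ∀ a : A, (1 : l) ⊗ₜ[k] a ∈ C := by
      intro a
      have ha : a ∈ Algebra.adjoin k s := hs ▸ Algebra.mem_top
      induction ha using Algebra.adjoin_induction with
      | mem x hx => exact Algebra.subset_adjoin ⟨x, hx, rfl⟩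
      | algebraMap r =>
        have : (1 : l) ⊗ₜ[k] (algebraMap k A r) = algebraMap k (l ⊗[k] A) r := by
          rw [Algebra.TensorProduct.algebraMap_apply, Algebra.algebraMap_eq_smul_one,
            Algebra.algebraMap_eq_smul_one, smul_tmul]
        rw [this, IsScalarTower.algebraMap_apply k l (l ⊗[k] A)]
        exact Subalgebra.algebraMap_mem C (algebraMap k l r)
      | add x y _ _ hx hy => rw [TensorProduct.tmul_add]; exact add_mem hx hy
      | mul x y _ _ hx hy =>
        have : (1 : l) ⊗ₜ[k] (x * y) = ((1 : l) ⊗ₜ[k] x) * ((1 : l) ⊗ₜ[k] y) := by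
          simp [Algebra.TensorProduct.tmul_mul_tmul]
        rw [this]; exact mul_mem hx hy
    rw [eq_top_iff]
    rintro x -
    induction x using TensorProduct.induction_on with
    | zero => exact zero_mem C
    | tmul c a =>
      have : c ⊗ₜ[k] a = c • ((1 : l) ⊗ₜ[k] a) := by
        rw [smul_tmul', smul_eq_mul, mul_one]
      rw [this]
      exact C.smul_mem (key a) c
    | add x y hx hy => exact add_mem hx hy
  · rintro ⟨hfg⟩
    classical
    obtain ⟨S, hS⟩ := hfg
    -- for each generator, choose a finite representation as a sum of pure tensors
    have rep : ∀ x : l ⊗[k] A, ∃ t : Finset (l × A), x = ∑ i ∈ t, i.1 ⊗ₜ[k] i.2 :=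
      fun x => TensorProduct.exists_finset x
    choose t ht using rep
    set T : Finset A := S.biUnion (fun x => (t x).image Prod.snd) with hT
    set B := Algebra.adjoin k (T : Set A) with hB
    -- the base-changed map l ⊗ B → l ⊗ A is surjective
    let φ : l ⊗[k] B →ₐ[l] l ⊗[k] A :=
      Algebra.TensorProduct.map (AlgHom.id l l) B.val
    have hφ : Function.Surjective φ := by
      rw [← AlgHom.range_eq_top, eq_top_iff, ← hS]
      apply Algebra.adjoin_le
      intro x hx
      rw [ht x]
      apply Subalgebra.sum_mem
      rintro ⟨c, a⟩ hi
      have haT : a ∈ T := by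
        simp only [hT, Finset.mem_biUnion, Finset.mem_image]
        exact ⟨x, hx, ⟨(c, a), hi, rfl⟩⟩
      exact ⟨c ⊗ₜ[k] ⟨a, Algebra.subset_adjoin haT⟩, rfl⟩
    -- deduce B = ⊤ by faithful flatness of l over k
    set M := Subalgebra.toSubmodule B with hM
    have hsub : Subsingleton (l ⊗[k] (A ⧸ M)) := by
      refine subsingleton_of_forall_eq 0 fun z => ?_
      have hzero : ∀ v : l ⊗[k] B, LinearMap.lTensor l M.mkQ (φ v) = 0 := by
        intro v
        induction v using TensorProduct.induction_on with
        | zero => rw [show φ 0 = 0 from φ.toLinearMap.map_zero, map_zero]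
        | tmul c b =>
          have h1 : φ (c ⊗ₜ[k] b) = c ⊗ₜ[k] (b : A) := rfl
          have h2 : M.mkQ (b : A) = 0 := (Submodule.Quotient.mk_eq_zero M).mpr b.2
          rw [h1, LinearMap.lTensor_tmul, h2, TensorProduct.tmul_zero]
        | add x y hx hy =>
          rw [show φ (x + y) = φ x + φ y from φ.toLinearMap.map_add x y, map_add, hx, hy, add_zero]
      obtain ⟨w, hw⟩ := LinearMap.lTensor_surjective (g := M.mkQ) l
        (Submodule.mkQ_surjective M) z
      obtain ⟨v, rfl⟩ := hφ w
      rw [← hw, hzero]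
    haveI := hsub
    have : Subsingleton (A ⧸ M) := Module.FaithfullyFlat.lTensor_reflects_triviality k l (A ⧸ M)
    have hMtop : M = ⊤ := Submodule.Quotient.subsingleton_iff.mp this
    have hBtop : B = ⊤ := by
      rwa [← Algebra.toSubmodule_eq_top]
    exact ⟨⟨T, hBtop⟩⟩
end

section
/- Let G be a group with the property (FG): whenever G acts by k-algebra automorphisms on a finitely generated commutative k-algebra B, the invariant ring B^G is a finitely generated k-algebra. Then G has property (Noeth): whenever G acts on a finitely generated commutative k-algebra A and compatibly on a Noetherian A-module M, the module of invariants M^G is a Noetherian (in particular finitely generated) A^G-module. (Proof via the square-zero extension A ⊕ M.) -/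
/-- The subalgebra of invariants of an action of a group `G` on a `k`-algebra `A`
by `k`-algebra automorphisms, given as a homomorphism `ρ : G →* (A ≃ₐ[k] A)`. -/
def invariantSubalgebra (k : Type*) [CommSemiring k] (A : Type*) [CommRing A] [Algebra k A]
    (G : Type*) [Group G] (ρ : G →* (A ≃ₐ[k] A)) : Subalgebra k A where
  carrier := {a : A | ∀ g : G, ρ g a = a}
  mul_mem' := fun {a b} ha hb g => by rw [map_mul, ha g, hb g]
  add_mem' := fun {a b} ha hb g => by rw [map_add, ha g, hb g]
  algebraMap_mem' := fun r g => AlgEquiv.commutes (ρ g) r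

instance addEquivSelfGroup (M : Type*) [Add M] : Group (M ≃+ M) where
  mul g h := AddEquiv.trans h g
  one := AddEquiv.refl _
  inv := AddEquiv.symm
  mul_assoc _ _ _ := rfl
  one_mul _ := rfl
  mul_one _ := rfl
  inv_mul_cancel := AddEquiv.self_trans_symm

/-- The submodule of invariants `M^G`, as a module over the invariant subalgebra `A^G`,
for a compatible action of `G` on an `A`-module `M`. -/
def invariantSubmodule (k : Type*) [CommSemiring k] (A : Type*) [CommRing A] [Algebra k A]
    (G : Type*) [Group G] (ρ : G →* (A ≃ₐ[k] A))
    (M : Type*) [AddCommGroup M] [Module A M] (σ : G →* (M ≃+ M))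
    (hcompat : ∀ (g : G) (a : A) (m : M), σ g (a • m) = (ρ g a) • (σ g m)) :
    Submodule (invariantSubalgebra k A G ρ) M where
  carrier := {m : M | ∀ g : G, σ g m = m}
  add_mem' := fun {m m'} hm hm' g => by rw [map_add, hm g, hm' g]
  zero_mem' := fun g => map_zero (σ g)
  smul_mem' := fun s {m} hm g => by
    have : σ g ((s : A) • m) = ((s : A) • m) := by rw [hcompat g s m, s.2 g, hm g]
    exact this

open TrivSqZeroExt MulOpposite

section Aux

set_option linter.unusedSectionVars false

variable {k : Type*} [Field k] {G : Type*} [Group G]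
  {A : Type*} [CommRing A] [Algebra k A]
  {M : Type*} [AddCommGroup M] [Module A M]
  [Module Aᵐᵒᵖ M] [IsCentralScalar A M]
  [Module k M] [IsScalarTower k A M] [IsScalarTower k Aᵐᵒᵖ M]
  (ρ : G →* (A ≃ₐ[k] A)) (σ : G →* (M ≃+ M))
  (hcompat : ∀ (g : G) (a : A) (m : M), σ g (a • m) = (ρ g a) • (σ g m))

/-- The action of `g : G` on the square-zero extension. -/
def sqAutFun (g : G) (x : TrivSqZeroExt A M) : TrivSqZeroExt A M :=
  ⟨ρ g x.fst, σ g x.snd⟩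

theorem sqAutFun_inv (g h : G) (x : TrivSqZeroExt A M) (hgh : g * h = 1) :
    sqAutFun ρ σ g (sqAutFun ρ σ h x) = x := by
  unfold sqAutFun
  ext
  · show ρ g (ρ h x.fst) = x.fst
    have : (ρ g * ρ h) x.fst = x.fst := by rw [← map_mul, hgh, map_one]; rfl
    exact this
  · show σ g (σ h x.snd) = x.snd
    have : (σ g * σ h) x.snd = x.snd := by rw [← map_mul, hgh, map_one]; rfl
    exact this

/-- The action of `g : G` on the square-zero extension, as an algebra automorphism. -/
def sqAut (g : G) : TrivSqZeroExt A M ≃ₐ[k] TrivSqZeroExt A M where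
  toFun := sqAutFun ρ σ g
  invFun := sqAutFun ρ σ g⁻¹
  left_inv x := sqAutFun_inv ρ σ g⁻¹ g x (inv_mul_cancel g)
  right_inv x := sqAutFun_inv ρ σ g g⁻¹ x (mul_inv_cancel g)
  map_add' x y := by
    unfold sqAutFun
    ext
    · show ρ g (x.fst + y.fst) = ρ g x.fst + ρ g y.fst
      rw [map_add]
    · show σ g (x.snd + y.snd) = σ g x.snd + σ g y.snd
      rw [map_add]
  map_mul' x y := by
    unfold sqAutFun
    ext
    · show ρ g (x.fst * y.fst) = ρ g x.fst * ρ g y.fst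
      rw [map_mul]
    · show σ g (x.fst • y.snd + op y.fst • x.snd)
        = ρ g x.fst • σ g y.snd + op (ρ g y.fst) • σ g x.snd
      rw [map_add, op_smul_eq_smul, op_smul_eq_smul, hcompat, hcompat]
  commutes' c := by
    show sqAutFun ρ σ g (inl (algebraMap k A c)) = inl (algebraMap k A c)
    unfold sqAutFun
    ext
    · show ρ g (algebraMap k A c) = algebraMap k A c
      exact (ρ g).commutes c
    · show σ g (0 : M) = 0
      exact map_zero _

/-- The induced `G`-action on the square-zero extension. -/
def sqAutHom : G →* (TrivSqZeroExt A M ≃ₐ[k] TrivSqZeroExt A M) where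
  toFun := sqAut ρ σ hcompat
  map_one' := by
    apply AlgEquiv.ext
    intro x
    show sqAutFun ρ σ 1 x = x
    unfold sqAutFun
    ext
    · show ρ 1 x.fst = x.fst
      rw [map_one]; rfl
    · show σ 1 x.snd = x.snd
      rw [map_one]; rfl
  map_mul' g h := by
    apply AlgEquiv.ext
    intro x
    show sqAutFun ρ σ (g * h) x = sqAutFun ρ σ g (sqAutFun ρ σ h x)
    unfold sqAutFun
    ext
    · show ρ (g * h) x.fst = ρ g (ρ h x.fst)
      rw [map_mul]; rfl
    · show σ (g * h) x.snd = σ g (σ h x.snd)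
      rw [map_mul]; rfl

end Aux

set_option maxHeartbeats 1000000 in
set_option synthInstance.maxHeartbeats 500000 in
/-- Property (FG) implies property (Noeth): suppose `G` has the property that for every
finitely generated commutative `k`-algebra `B` with a `G`-action by `k`-algebra
automorphisms the invariant ring `B^G` is a finitely generated `k`-algebra. Then,
whenever `G` acts on a finitely generated commutative `k`-algebra `A` and compatibly on
a Noetherian `A`-module `M`, the invariants `M^G` form a Noetherian module over `A^G`. -/
theorem fg_implies_noeth (k : Type*) [Field k] (G : Type u) [Group G]
    (hFG : ∀ (B : Type u) [CommRing B] [Algebra k B] (ρ : G →* (B ≃ₐ[k] B)),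
      Algebra.FiniteType k B → Algebra.FiniteType k (invariantSubalgebra k B G ρ))
    (A : Type u) [CommRing A] [Algebra k A] (hA : Algebra.FiniteType k A)
    (ρ : G →* (A ≃ₐ[k] A))
    (M : Type u) [AddCommGroup M] [Module A M] [IsNoetherian A M]
    (σ : G →* (M ≃+ M))
    (hcompat : ∀ (g : G) (a : A) (m : M), σ g (a • m) = (ρ g a) • (σ g m)) :
    IsNoetherian (invariantSubalgebra k A G ρ)
      (invariantSubmodule k A G ρ M σ hcompat) := by
  -- set up the bimodule structure needed for the square-zero extension
  letI : Module Aᵐᵒᵖ M := Module.compHom M ((RingHom.id A).fromOpposite mul_comm)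
  haveI : IsCentralScalar A M := ⟨fun _ _ => rfl⟩
  letI : Module k M := Module.compHom M (algebraMap k A)
  haveI : IsScalarTower k A M :=
    ⟨fun c a m => by
      show ((c • a) • m : M) = algebraMap k A c • (a • m)
      rw [Algebra.smul_def, mul_smul]⟩
  haveI : IsScalarTower k Aᵐᵒᵖ M :=
    ⟨fun c x m => by
      show ((c • x).unop • m : M) = algebraMap k A c • (x.unop • m)
      rw [MulOpposite.unop_smul, Algebra.smul_def, mul_smul]⟩
  haveI : SMulCommClass A Aᵐᵒᵖ M :=
    ⟨fun a x m => by
      show a • (x.unop • m) = x.unop • (a • m)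
      exact smul_comm a x.unop m⟩
  let ρ' := sqAutHom (k := k) ρ σ hcompat
  -- `B = A ⊕ M` is a finitely generated `k`-algebra
  haveI : Module.Finite A (TrivSqZeroExt A M) :=
    Module.Finite.equiv
      ({ toFun := fun p => (⟨p.1, p.2⟩ : TrivSqZeroExt A M)
         invFun := fun x => (x.fst, x.snd)
         map_add' := fun _ _ => rfl
         map_smul' := fun _ _ => rfl
         left_inv := fun _ => rfl
         right_inv := fun _ => rfl } : (A × M) ≃ₗ[A] TrivSqZeroExt A M)
  haveI : IsScalarTower k A (TrivSqZeroExt A M) := IsScalarTower.of_algebraMap_eq fun _ => rfl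
  have hBft : Algebra.FiniteType k (TrivSqZeroExt A M) :=
    Algebra.FiniteType.trans hA inferInstance
  -- hence the invariant ring `B^G` is Noetherian
  have hBGft : Algebra.FiniteType k (invariantSubalgebra k (TrivSqZeroExt A M) G ρ') :=
    hFG _ ρ' hBft
  haveI hBGnoeth : IsNoetherianRing (invariantSubalgebra k (TrivSqZeroExt A M) G ρ') :=
    Algebra.FiniteType.isNoetherianRing k _
  let N := invariantSubmodule k A G ρ M σ hcompat
  let R := invariantSubalgebra k A G ρ
  let BG := invariantSubalgebra k (TrivSqZeroExt A M) G ρ'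
  have memN : ∀ x : BG, x.1.snd ∈ N := fun x =>
    show ∀ g : G, σ g x.1.snd = x.1.snd from fun g =>
      congrArg TrivSqZeroExt.snd ((x.2 : ∀ g : G, ρ' g x.1 = x.1) g)
  have memR : ∀ x : BG, x.1.fst ∈ R := fun x =>
    show ∀ g : G, ρ g x.1.fst = x.1.fst from fun g =>
      congrArg TrivSqZeroExt.fst ((x.2 : ∀ g : G, ρ' g x.1 = x.1) g)
  -- the strictly monotone map from submodules of `N = M^G` over `R = A^G` to ideals of `B^G`
  let F : Submodule R N → Ideal BG := fun P =>
    { carrier := {x : BG | x.1.fst = 0 ∧ (⟨x.1.snd, memN x⟩ : N) ∈ P}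
      zero_mem' := ⟨rfl, P.zero_mem⟩
      add_mem' := fun {x y} hx hy => by
        refine ⟨?_, ?_⟩
        · show x.1.fst + y.1.fst = 0
          rw [hx.1, hy.1, add_zero]
        · have : (⟨(x + y).1.snd, memN _⟩ : N)
              = (⟨x.1.snd, memN x⟩ : N) + (⟨y.1.snd, memN y⟩ : N) := rfl
          rw [this]
          exact P.add_mem hx.2 hy.2
      smul_mem' := fun c {x} hx => by
        have hsnd : (c • x : BG).1.snd = c.1.fst • x.1.snd := by
          show (c.1 * x.1).snd = c.1.fst • x.1.snd
          rw [TrivSqZeroExt.snd_mul, hx.1, MulOpposite.op_zero, zero_smul, add_zero]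
        refine ⟨?_, ?_⟩
        · show (c.1 * x.1).fst = 0
          rw [TrivSqZeroExt.fst_mul, hx.1, mul_zero]
        · have : (⟨(c • x : BG).1.snd, memN _⟩ : N)
              = (⟨c.1.fst, memR c⟩ : R) • (⟨x.1.snd, memN x⟩ : N) := Subtype.ext hsnd
          rw [this]
          exact P.smul_mem _ hx.2 }
  have memF : ∀ (P : Submodule R N) (x : BG),
      x ∈ F P ↔ (x.1.fst = 0 ∧ (⟨x.1.snd, memN x⟩ : N) ∈ P) := fun _ _ => Iff.rfl
  have hFmono : StrictMono F := by
    intro P Q hPQ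
    refine lt_of_le_of_ne ?_ ?_
    · intro x hx
      rw [memF P x] at hx
      rw [memF Q x]
      exact ⟨hx.1, hPQ.le hx.2⟩
    · obtain ⟨n, hnQ, hnP⟩ := SetLike.exists_of_lt hPQ
      intro hEq
      apply hnP
      have hinv : ∀ g : G, ρ' g (TrivSqZeroExt.inr n.1) = TrivSqZeroExt.inr n.1 := by
        intro g
        show sqAutFun ρ σ g ⟨0, n.1⟩ = (⟨0, n.1⟩ : TrivSqZeroExt A M)
        unfold sqAutFun
        ext
        · show ρ g 0 = 0
          exact map_zero _
        · show σ g n.1 = n.1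
          exact (n.2 : ∀ g : G, σ g n.1 = n.1) g
      have hyQ : (⟨TrivSqZeroExt.inr n.1, hinv⟩ : BG) ∈ F Q :=
        (memF Q _).mpr ⟨rfl, hnQ⟩
      rw [← hEq] at hyQ
      exact ((memF P _).mp hyQ).2
  rw [isNoetherian_iff]
  have hwf : WellFounded ((· > ·) : Ideal BG → Ideal BG → Prop) := isNoetherian_iff.mp hBGnoeth
  exact Subrelation.wf (fun {P Q} (h : P > Q) => (hFmono h : F P > F Q)) (InvImage.wf F hwf)
end
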